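/- Suppose that for each z ∈ G there is a bounded open set U ⊆ G with z ∈ U, ∂U ⊆ E_v, and inf_{ζ∈∂U} v(ζ) > 0. Then H^∞_v(G) is a Banach space. -/

import Mathlib

open Complex Metric Set Filter Topology MeasureTheory

noncomputable section

/-- `f` is holomorphic on `G` and `sup_{z in G} v z * |f z| < ∞`. -/
def MemHv (G : Set ℂ) (v : ℂ → ℝ) (f : ℂ → ℂ) : Prop :=
  DifferentiableOn ℂ f G ∧ ∃ C : ℝ, ∀ z ∈ G, v z * ‖f z‖ ≤ C

/-- The weighted sup-seminorm `‖f‖_v`. -/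
def HvNorm (G : Set ℂ) (v : ℂ → ℝ) (f : ℂ → ℂ) : ℝ :=
  sSup ((fun z => v z * ‖f z‖) '' G)

/-- A `‖·‖_v`-Cauchy sequence. -/
def HvCauchy (G : Set ℂ) (v : ℂ → ℝ) (F : ℕ → ℂ → ℂ) : Prop :=
  ∀ ε : ℝ, 0 < ε → ∃ N : ℕ, ∀ m ≥ N, ∀ n ≥ N, ∀ z ∈ G,
    v z * ‖F m z - F n z‖ ≤ ε

/-- Convergence in the `‖·‖_v`-seminorm. -/
def HvTendsto (G : Set ℂ) (v : ℂ → ℝ) (F : ℕ → ℂ → ℂ) (f : ℂ → ℂ) : Prop :=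
  ∀ ε : ℝ, 0 < ε → ∃ N : ℕ, ∀ n ≥ N, ∀ z ∈ G,
    v z * ‖F n z - f z‖ ≤ ε

/-- Completeness of `H^∞_v(G)`: every Cauchy sequence converges in the space. -/
def HvComplete (G : Set ℂ) (v : ℂ → ℝ) : Prop :=
  ∀ F : ℕ → ℂ → ℂ, (∀ n, MemHv G v (F n)) → HvCauchy G v F →
    ∃ f : ℂ → ℂ, MemHv G v f ∧ HvTendsto G v F f

/-- The seminorm `‖·‖_v` is a norm: `‖f‖_v = 0` forces `f = 0` on `G`. -/
def HvNormed (G : Set ℂ) (v : ℂ → ℝ) : Prop :=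
  ∀ f : ℂ → ℂ, MemHv G v f → (∀ z ∈ G, v z * ‖f z‖ = 0) →
    ∀ z ∈ G, f z = 0

/-- `H^∞_v(G)` is a Banach space. -/
def IsBanachHv (G : Set ℂ) (v : ℂ → ℝ) : Prop :=
  HvNormed G v ∧ HvComplete G v

/-- Key local estimate: around each point there is an open set `U` and `c > 0` such that
any function holomorphic on `G` with `v ⬝ |g| ≤ C` on `G` satisfies `|g| ≤ C / c` on `closure U`. -/
lemma key_estimate (G : Set ℂ) (v : ℂ → ℝ)
    (h : ∀ z ∈ G, ∃ U : Set ℂ, IsOpen U ∧ Bornology.IsBounded U ∧ U ⊆ G ∧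
      z ∈ U ∧ frontier U ⊆ {w ∈ G | 0 < v w} ∧
      ∃ c > (0:ℝ), ∀ ζ ∈ frontier U, c ≤ v ζ) :
    ∀ z ∈ G, ∃ U : Set ℂ, IsOpen U ∧ z ∈ U ∧ U ⊆ G ∧ ∃ c > (0:ℝ),
      ∀ g : ℂ → ℂ, DifferentiableOn ℂ g G → ∀ C : ℝ,
        (∀ w ∈ G, v w * ‖g w‖ ≤ C) →
        ∀ w ∈ closure U, ‖g w‖ ≤ C / c := by
  intro z hz
  obtain ⟨U, hUo, hUb, hUG, hzU, hfr, c, hc, hcv⟩ := h z hz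
  have hclG : closure U ⊆ G := by
    rw [closure_eq_self_union_frontier]
    exact union_subset hUG (fun w hw => (hfr hw).1)
  refine ⟨U, hUo, hzU, hUG, c, hc, fun g hg C hC w hw => ?_⟩
  have hdc : DiffContOnCl ℂ g U :=
    ⟨hg.mono hUG, (hg.continuousOn).mono hclG⟩
  have : ∀ ζ ∈ frontier U, ‖g ζ‖ ≤ C / c := by
    intro ζ hζ
    obtain ⟨hζG, hζv⟩ := hfr hζ
    rw [le_div_iff₀ hc]
    calc ‖g ζ‖ * c = c * ‖g ζ‖ := by rw [mul_comm]
      _ ≤ v ζ * ‖g ζ‖ :=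
          mul_le_mul_of_nonneg_right (hcv ζ hζ) (norm_nonneg _)
      _ ≤ C := hC ζ hζG
  exact Complex.norm_le_of_forall_mem_frontier_norm_le hUb hdc this hw

theorem stmt13 (G : Set ℂ) (v : ℂ → ℝ) (hG : IsOpen G) (hGc : IsConnected G)
    (hv : ∀ z ∈ G, 0 ≤ v z)
    (h : ∀ z ∈ G, ∃ U : Set ℂ, IsOpen U ∧ Bornology.IsBounded U ∧ U ⊆ G ∧
      z ∈ U ∧ frontier U ⊆ {w ∈ G | 0 < v w} ∧
      ∃ c > (0:ℝ), ∀ ζ ∈ frontier U, c ≤ v ζ) :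
    IsBanachHv G v := by
  have key := key_estimate G v h
  constructor
  · -- HvNormed
    intro f hf hf0 z hz
    obtain ⟨U, hUo, hzU, hUG, c, hc, hest⟩ := key z hz
    have : ‖f z‖ ≤ 0 / c := by
      refine hest f hf.1 0 (fun w hw => le_of_eq (hf0 w hw)) z (subset_closure hzU)
    rw [zero_div] at this
    have : ‖f z‖ = 0 := le_antisymm this (norm_nonneg _)
    exact norm_eq_zero.mp this
  · -- HvComplete
    intro F hF hFc
    -- pointwise Cauchy, hence pointwise limit
    have hptC : ∀ z ∈ G, CauchySeq (fun n => F n z) := by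
      intro z hz
      obtain ⟨U, hUo, hzU, hUG, c, hc, hest⟩ := key z hz
      rw [Metric.cauchySeq_iff]
      intro ε hε
      obtain ⟨N, hN⟩ := hFc (ε * c / 2) (by positivity)
      refine ⟨N, fun m hm n hn => ?_⟩
      have hd : DifferentiableOn ℂ (fun w => F m w - F n w) G :=
        (hF m).1.sub (hF n).1
      have := hest (fun w => F m w - F n w) hd (ε * c / 2)
        (fun w hw => hN m hm n hn w hw) z (subset_closure hzU)
      have hdist : dist (F m z) (F n z) = ‖F m z - F n z‖ := dist_eq_norm _ _
      rw [hdist]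
      calc ‖F m z - F n z‖ ≤ ε * c / 2 / c := this
        _ = ε / 2 := by field_simp
        _ < ε := by linarith
    set f : ℂ → ℂ := fun z => limUnder atTop (fun n => F n z) with hf_def
    have hlim : ∀ z ∈ G, Tendsto (fun n => F n z) atTop (𝓝 (f z)) := by
      intro z hz
      exact (hptC z hz).tendsto_limUnder
    -- HvTendsto
    have htend : HvTendsto G v F f := by
      intro ε hε
      obtain ⟨N, hN⟩ := hFc (ε / 2) (by linarith)
      refine ⟨N, fun n hn z hz => ?_⟩
      have h1 : Tendsto (fun m => v z * ‖F n z - F m z‖) atTop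
          (𝓝 (v z * ‖F n z - f z‖)) := by
        have : Continuous fun w : ℂ => v z * ‖F n z - w‖ := by
          continuity
        exact (this.tendsto _).comp (hlim z hz)
      have h2 : ∀ᶠ m in atTop, v z * ‖F n z - F m z‖ ≤ ε / 2 :=
        eventually_atTop.mpr ⟨N, fun m hm => hN n hn m hm z hz⟩
      have := le_of_tendsto h1 h2
      linarith
    -- local uniform convergence
    have hlocunif : TendstoLocallyUniformlyOn F f atTop G := by
      intro u hu x hx
      obtain ⟨U, hUo, hxU, hUG, c, hc, hest⟩ := key x hx
      refine ⟨U, mem_nhdsWithin_of_mem_nhds (hUo.mem_nhds hxU), ?_⟩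
      obtain ⟨ε, hε, hεu⟩ := Metric.mem_uniformity_dist.mp hu
      obtain ⟨N, hN⟩ := hFc (ε / 2 * c) (by positivity)
      have hunif : ∀ n ≥ N, ∀ y ∈ U, dist (f y) (F n y) < ε := by
        intro n hn y hy
        have hbd : ∀ m ≥ N, ‖F m y - F n y‖ ≤ ε / 2 := by
          intro m hm
          have hd : DifferentiableOn ℂ (fun w => F m w - F n w) G :=
            (hF m).1.sub (hF n).1
          have := hest (fun w => F m w - F n w) hd (ε / 2 * c)
            (fun w hw => hN m hm n hn w hw) y (subset_closure hy)
          calc ‖F m y - F n y‖ ≤ ε / 2 * c / c := this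
            _ = ε / 2 := by field_simp
        have hty : Tendsto (fun m => ‖F m y - F n y‖) atTop
            (𝓝 (‖f y - F n y‖)) := by
          have hcont : Continuous fun w : ℂ => ‖w - F n y‖ := by
            continuity
          exact (hcont.tendsto _).comp (hlim y (hUG hy))
        have : ‖f y - F n y‖ ≤ ε / 2 :=
          le_of_tendsto hty (eventually_atTop.mpr ⟨N, hbd⟩)
        have hdist : dist (f y) (F n y) = ‖f y - F n y‖ := dist_eq_norm _ _
        rw [hdist]; linarith
      filter_upwards [eventually_ge_atTop N] with n hn
      intro y hy
      exact hεu (hunif n hn y hy)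
    have hfd : DifferentiableOn ℂ f G :=
      hlocunif.differentiableOn (Eventually.of_forall fun n => (hF n).1) hG
    refine ⟨f, ⟨hfd, ?_⟩, htend⟩
    -- boundedness of f
    obtain ⟨N, hN⟩ := htend 1 one_pos
    obtain ⟨C, hC⟩ := (hF N).2
    refine ⟨C + 1, fun z hz => ?_⟩
    have h1 : v z * ‖f z‖ ≤
        v z * ‖F N z‖ + v z * ‖F N z - f z‖ := by
      rw [← mul_add]
      refine mul_le_mul_of_nonneg_left ?_ (hv z hz)
      have hns := norm_sub_le (F N z) (F N z - f z)
      simp only [sub_sub_cancel] at hns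
      simpa using hns
    have := hN N le_rfl z hz
    have := hC z hz
    linarith
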